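/- Let q be a positive integer, F : (Fin q → ℝ) → ℝ, w ∈ ℝ^q, g ∈ ℝ^q, and L ∈ ℝ^q with nonnegative entries such that for every w' ∈ ℝ^q, |F(w') − F(w) − ⟨g, w' − w⟩| ≤ (1/2)·Σᵢ Lᵢ·(w'ᵢ − wᵢ)². Let η > 0 and let V be a random vector on a probability space taking values in {−1, +1}^q (measurable), and suppose there are p₁, …, p_q ∈ [0, 1] with P[Vᵢ ≠ sign(gᵢ)] ≤ pᵢ for each i, where sign(x) = 1 for x ≥ 0 and sign(x) = −1 for x < 0. Then E[F(w − η·V)] ≤ F(w) − η·Σᵢ |gᵢ|·(1 − 2pᵢ) + (η²/2)·Σᵢ Lᵢ. -/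

import Mathlib

open Finset MeasureTheory ProbabilityTheory in
/-- expected one-round descent bound when the random sign vector `V` (values
in `{−1,+1}^q`) disagrees with `sign(gᵢ)` with probability at most `pᵢ` per coordinate,
where `sign(x) = 1` for `x ≥ 0` and `sign(x) = −1` for `x < 0`. -/
theorem stmt_8 {Ω : Type*} [MeasureSpace Ω] [IsProbabilityMeasure (ℙ : Measure Ω)]
    (q : ℕ) (hq : 0 < q) (F : (Fin q → ℝ) → ℝ) (w g L : Fin q → ℝ)
    (hL : ∀ i, 0 ≤ L i)
    (hsmooth : ∀ w' : Fin q → ℝ,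
      |F w' - F w - ∑ i, g i * (w' i - w i)| ≤ (1 / 2) * ∑ i, L i * (w' i - w i) ^ 2)
    (η : ℝ) (hη : 0 < η)
    (V : Ω → Fin q → ℝ) (hVmeas : Measurable V)
    (hVval : ∀ ω i, V ω i = -1 ∨ V ω i = 1)
    (p : Fin q → ℝ) (hp : ∀ i, p i ∈ Set.Icc (0 : ℝ) 1)
    (hperr : ∀ i,
      (ℙ {ω | V ω i ≠ (if 0 ≤ g i then (1 : ℝ) else -1)}).toReal ≤ p i) :
    ∫ ω, F (fun i => w i - η * V ω i) ≤
      F w - η * ∑ i, |g i| * (1 - 2 * p i) + (η ^ 2 / 2) * ∑ i, L i := by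
  classical
  set s : Fin q → ℝ := fun i => if 0 ≤ g i then (1 : ℝ) else -1 with hs
  have hVsq : ∀ ω i, (V ω i) ^ 2 = 1 := by
    intro ω i; rcases hVval ω i with h | h <;> simp [h]
  -- pointwise bound
  have hpt : ∀ ω, F (fun i => w i - η * V ω i) ≤
      F w - η * ∑ i, g i * V ω i + (η ^ 2 / 2) * ∑ i, L i := by
    intro ω
    have h := (abs_le.mp (hsmooth (fun i => w i - η * V ω i))).2
    have e1 : ∑ i, g i * ((w i - η * V ω i) - w i) = -(η * ∑ i, g i * V ω i) := by
      rw [Finset.mul_sum, ← Finset.sum_neg_distrib]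
      exact Finset.sum_congr rfl fun i _ => by ring
    have e2 : ∑ i, L i * ((w i - η * V ω i) - w i) ^ 2 = η ^ 2 * ∑ i, L i := by
      rw [Finset.mul_sum]
      refine Finset.sum_congr rfl fun i _ => ?_
      have : ((w i - η * V ω i) - w i) ^ 2 = η ^ 2 * (V ω i) ^ 2 := by ring
      rw [this, hVsq ω i]; ring
    rw [e1, e2] at h
    linarith
  -- integrability of coordinates
  have hVi_meas : ∀ i, Measurable fun ω => V ω i := fun i =>
    (measurable_pi_apply i).comp hVmeas
  have hVi_int : ∀ i, Integrable (fun ω => V ω i) ℙ := by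
    intro i
    refine ⟨(hVi_meas i).aestronglyMeasurable, ?_⟩
    apply MeasureTheory.HasFiniteIntegral.of_bounded (C := 1)
    filter_upwards with ω
    rcases hVval ω i with h | h <;> simp [h]
  have hRHS_int : Integrable (fun ω => F w - η * ∑ i, g i * V ω i + (η ^ 2 / 2) * ∑ i, L i) ℙ := by
    refine Integrable.add (Integrable.sub (integrable_const _) ?_) (integrable_const _)
    refine Integrable.const_mul ?_ η
    exact integrable_finset_sum _ fun i _ => (hVi_int i).const_mul (g i)
  -- integrability of LHS via finite range
  set T : Finset (Fin q → ℝ) := Fintype.piFinset (fun _ => ({-1, 1} : Finset ℝ)) with hT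
  have hVT : ∀ ω, V ω ∈ T := by
    intro ω
    rw [hT, Fintype.mem_piFinset]
    intro i
    rcases hVval ω i with h | h <;> simp [h]
  have hfeq : (fun ω => F (fun i => w i - η * V ω i)) =
      fun ω => ∑ v ∈ T, if V ω = v then F (fun i => w i - η * v i) else 0 := by
    funext ω
    rw [Finset.sum_ite_eq, if_pos (hVT ω)]
  have hsetmeas : ∀ v : Fin q → ℝ, MeasurableSet {ω | V ω = v} := by
    intro v
    exact hVmeas (MeasurableSet.singleton v)
  have hf_int : Integrable (fun ω => F (fun i => w i - η * V ω i)) ℙ := by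
    rw [hfeq]
    refine integrable_finset_sum _ fun v _ => ?_
    have : (fun ω => if V ω = v then F (fun i => w i - η * v i) else 0) =
        Set.indicator {ω | V ω = v} (fun _ => F (fun i => w i - η * v i)) := by
      funext ω; simp [Set.indicator_apply, Set.mem_setOf_eq]
    rw [this]
    exact (integrable_const _).indicator (hsetmeas v)
  -- main chain
  have step1 : ∫ ω, F (fun i => w i - η * V ω i) ≤
      ∫ ω, (F w - η * ∑ i, g i * V ω i + (η ^ 2 / 2) * ∑ i, L i) :=
    integral_mono hf_int hRHS_int hpt
  have hint_sum : Integrable (fun ω => ∑ i, g i * V ω i) ℙ :=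
    integrable_finset_sum _ fun i _ => (hVi_int i).const_mul (g i)
  have e4 : ∫ ω, η * ∑ i, g i * V ω i = η * ∑ i, g i * ∫ ω, V ω i := by
    rw [integral_const_mul, integral_finset_sum _ fun i _ => (hVi_int i).const_mul (g i)]
    congr 1
    exact Finset.sum_congr rfl fun i _ => integral_const_mul (g i) _
  have step2 : ∫ ω, (F w - η * ∑ i, g i * V ω i + (η ^ 2 / 2) * ∑ i, L i) =
      F w - η * ∑ i, g i * (∫ ω, V ω i) + (η ^ 2 / 2) * ∑ i, L i := by
    have hre : (fun ω => F w - η * ∑ i, g i * V ω i + (η ^ 2 / 2) * ∑ i, L i) =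
        fun ω => (F w + (η ^ 2 / 2) * ∑ i, L i) - η * ∑ i, g i * V ω i :=
      funext fun ω => by ring
    rw [hre, integral_sub (integrable_const _) (hint_sum.const_mul η),
      integral_const, e4]
    simp only [measureReal_def, measure_univ, ENNReal.toReal_one, one_smul]
    ring
  -- per-coordinate bound on the expectation
  have hcoord : ∀ i, |g i| * (1 - 2 * p i) ≤ g i * ∫ ω, V ω i := by
    intro i
    set A : Set Ω := {ω | V ω i ≠ s i} with hA
    have hAmeas : MeasurableSet A := by
      have : A = (fun ω => V ω i) ⁻¹' {s i}ᶜ := by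
        ext ω; simp [hA, Set.mem_preimage]
      rw [this]
      exact hVi_meas i (MeasurableSet.singleton (s i)).compl
    have hss : s i * s i = 1 := by
      rw [hs]; by_cases h : 0 ≤ g i <;> simp [h]
    have hptw : ∀ ω, s i * V ω i = 1 - 2 * A.indicator (1 : Ω → ℝ) ω := by
      intro ω
      by_cases h : V ω i = s i
      · have : ω ∉ A := by simp [hA, h]
        rw [Set.indicator_of_notMem this, h, hss]; ring
      · have hmem : ω ∈ A := h
        rw [Set.indicator_of_mem hmem]
        have hsv : s i = -1 ∨ s i = 1 := by
          rw [hs]; by_cases h' : 0 ≤ g i <;> simp [h']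
        rcases hVval ω i with h1 | h1 <;> rcases hsv with h2 | h2 <;>
          simp [h1, h2] at h ⊢ <;> norm_num
    have hfun : (fun ω => s i * V ω i) =
        fun ω => (1 : ℝ) - 2 * A.indicator (1 : Ω → ℝ) ω := funext hptw
    have hind : Integrable (fun ω => 2 * A.indicator (1 : Ω → ℝ) ω) ℙ :=
      ((integrable_const (1 : ℝ)).indicator hAmeas).const_mul 2
    have hint : ∫ ω, s i * V ω i = 1 - 2 * (ℙ A).toReal := by
      rw [hfun, integral_sub (integrable_const _) hind, integral_const,
        integral_const_mul, integral_indicator_one hAmeas]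
      simp [measure_univ, measureReal_def]
    have hgs : g i = |g i| * s i := by
      rw [hs]
      by_cases h : 0 ≤ g i
      · simp [h, abs_of_nonneg h]
      · simp only [h, if_false, abs_of_neg (not_le.mp h)]; ring
    have hAp : (ℙ A).toReal ≤ p i := hperr i
    have h1 : 1 - 2 * p i ≤ s i * ∫ ω, V ω i := by
      rw [← integral_const_mul, hint]; linarith
    calc |g i| * (1 - 2 * p i) ≤ |g i| * (s i * ∫ ω, V ω i) :=
          mul_le_mul_of_nonneg_left h1 (abs_nonneg _)
      _ = g i * ∫ ω, V ω i := by rw [← mul_assoc, ← hgs]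
  have hsum : ∑ i, |g i| * (1 - 2 * p i) ≤ ∑ i, g i * ∫ ω, V ω i :=
    Finset.sum_le_sum fun i _ => hcoord i
  have := step1.trans_eq step2
  have hmul : η * ∑ i, |g i| * (1 - 2 * p i) ≤ η * ∑ i, g i * ∫ ω, V ω i :=
    mul_le_mul_of_nonneg_left hsum hη.le
  linarith
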